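/- arXiv:1301.1054 — 9 statements merged into one kernel-verified Lean document; each statement's English description precedes it below -/
import Mathlib

section
/- The numerical range of a bounded self-adjoint operator on a complex Hilbert space is a convex subset of ℝ (an interval): for any two unit vectors f, g, every real number between ⟨Af,f⟩ and ⟨Ag,g⟩ is attained as ⟨Ah,h⟩ for some unit vector h. -/
/-- The numerical range of a bounded self-adjoint operator is an interval: any
real number between the values at two unit vectors is attained at a unit vector. -/
theorem numerical_range_convex {H : Type*} [NormedAddCommGroup H] [InnerProductSpace ℂ H]
    [CompleteSpace H] (A : H →L[ℂ] H)
    (hA : ∀ f g : H, (inner ℂ (A f) g : ℂ) = inner ℂ f (A g)) :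
    ∀ f g : H, ‖f‖ = 1 → ‖g‖ = 1 → ∀ t : ℝ,
      t ∈ Set.uIcc ((inner ℂ (A f) f : ℂ).re) ((inner ℂ (A g) g : ℂ).re) →
      ∃ h : H, ‖h‖ = 1 ∧ ((inner ℂ (A h) h : ℂ)).re = t := by
  intro f g hf hg t ht
  by_cases hfg : f = -g
  · have hval : (inner ℂ (A f) f : ℂ) = inner ℂ (A g) g := by
      rw [hfg]; simp
    rw [hval, Set.uIcc_self, Set.mem_singleton_iff] at ht
    exact ⟨g, hg, by rw [ht]⟩
  · set u : ℝ → H := fun s => (1 - s) • f + s • g with hu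
    have hcont_u : Continuous u := by fun_prop
    have hne : ∀ s ∈ Set.Icc (0 : ℝ) 1, u s ≠ 0 := by
      intro s hs h0
      have h1 : (1 - s) • f = s • (-g) := by
        rw [smul_neg, eq_neg_iff_add_eq_zero]; exact h0
      have hnorm : (1 - s) = s := by
        have := congrArg norm h1
        rw [norm_smul, norm_smul, norm_neg, hf, hg] at this
        simpa [abs_of_nonneg hs.1, abs_of_nonneg (by linarith [hs.2] : (0:ℝ) ≤ 1 - s)] using this
      have hs2 : s = 1 / 2 := by linarith
      apply hfg
      have h2 : s • f = s • (-g) := by rw [← h1, hnorm]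
      have : f = -g := smul_right_injective H (by rw [hs2]; norm_num) h2
      exact this
    set φ : ℝ → ℝ := fun s => (inner ℂ (A (u s)) (u s) : ℂ).re / ‖u s‖ ^ 2 with hφ
    have hφcont : ContinuousOn φ (Set.Icc (0 : ℝ) 1) := by
      apply ContinuousOn.div
      · exact (Complex.continuous_re.comp
          ((continuous_inner.comp ((A.continuous.comp hcont_u).prodMk hcont_u)))).continuousOn
      · exact ((hcont_u.norm.pow 2)).continuousOn
      · intro s hs
        exact pow_ne_zero 2 (norm_ne_zero_iff.mpr (hne s hs))
    have hu0 : u 0 = f := by simp [hu]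
    have hu1 : u 1 = g := by simp [hu]
    have hφ0 : φ 0 = (inner ℂ (A f) f : ℂ).re := by simp [hφ, hu0, hf]
    have hφ1 : φ 1 = (inner ℂ (A g) g : ℂ).re := by simp [hφ, hu1, hg]
    have hsub := intermediate_value_uIcc (by rwa [Set.uIcc_of_le zero_le_one] : ContinuousOn φ (Set.uIcc (0 : ℝ) 1))
    rw [hφ0, hφ1] at hsub
    obtain ⟨s, hs, hst⟩ := hsub ht
    rw [Set.uIcc_of_le zero_le_one] at hs
    have husne : u s ≠ 0 := hne s hs
    have hnorm_ne : ‖u s‖ ≠ 0 := norm_ne_zero_iff.mpr husne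
    refine ⟨‖u s‖⁻¹ • u s, ?_, ?_⟩
    · rw [norm_smul, norm_inv, norm_norm, inv_mul_cancel₀ hnorm_ne]
    · have hsm : (‖u s‖⁻¹ : ℝ) • u s = ((‖u s‖⁻¹ : ℝ) : ℂ) • u s := by
        rw [Complex.coe_smul]
      rw [hsm, map_smul, inner_smul_left, inner_smul_right]
      rw [Complex.conj_ofReal]
      have : (((‖u s‖⁻¹ : ℝ) : ℂ) * (((‖u s‖⁻¹ : ℝ) : ℂ) * (inner ℂ (A (u s)) (u s) : ℂ))).re
          = ‖u s‖⁻¹ * (‖u s‖⁻¹ * (inner ℂ (A (u s)) (u s) : ℂ).re) := by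
        simp [Complex.mul_re]
      rw [this, ← hst]
      simp only [hφ]
      field_simp
end

section
/- Hoffman's bound for the chromatic number of a symmetric matrix: if B is a nonzero real symmetric n×n matrix with smallest eigenvalue m(B) and largest eigenvalue M(B), and the vertex set {1,...,n} can be partitioned into k sets C₁,...,Cₖ such that fᵀ B f = 0 for every vector f supported on a single Cᵢ, then k ≥ (M(B) − m(B))/(−m(B)). -/
open Matrix

section aux
variable {n : ℕ}

lemma quad_lb (B : Matrix (Fin n) (Fin n) ℝ) (hB : B.IsHermitian) (m : ℝ)
    (hm : ∀ i, m ≤ hB.eigenvalues i) (x : Fin n → ℝ) :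
    m * (x ⬝ᵥ x) ≤ x ⬝ᵥ (B *ᵥ x) := by
  classical
  set U : Matrix (Fin n) (Fin n) ℝ := (hB.eigenvectorUnitary : Matrix (Fin n) (Fin n) ℝ) with hU
  have hstar : star U = Uᵀ := by
    rw [Matrix.star_eq_conjTranspose, conjTranspose_eq_transpose_of_trivial]
  set y : Fin n → ℝ := x ᵥ* U with hy
  have hUU : U * Uᵀ = 1 := by
    rw [← hstar]; exact (Matrix.mem_unitaryGroup_iff).mp hB.eigenvectorUnitary.2
  have hxy : x ⬝ᵥ x = y ⬝ᵥ y := by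
    rw [hy]
    rw [show x ᵥ* U ⬝ᵥ x ᵥ* U = x ᵥ* U ⬝ᵥ (Uᵀ *ᵥ x) by rw [mulVec_transpose],
      dotProduct_mulVec, vecMul_vecMul, hUU, vecMul_one]
  have hquad : x ⬝ᵥ (B *ᵥ x) = ∑ i, hB.eigenvalues i * (y i)^2 := by
    conv_lhs => rw [hB.spectral_theorem, Unitary.conjStarAlgAut_apply, hstar]
    rw [← mulVec_mulVec, ← mulVec_mulVec, dotProduct_mulVec, ← hU, mulVec_transpose, ← hy]
    simp [dotProduct, mulVec_diagonal]
    exact Finset.sum_congr rfl fun i _ => by ring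
  rw [hxy, hquad]
  simp only [dotProduct, Finset.mul_sum]
  apply Finset.sum_le_sum
  intro i _
  calc m * (y i * y i) ≤ hB.eigenvalues i * (y i * y i) :=
        mul_le_mul_of_nonneg_right (hm i) (mul_self_nonneg _)
    _ = hB.eigenvalues i * (y i)^2 := by ring

lemma symm_bilin (B : Matrix (Fin n) (Fin n) ℝ) (hB : B.IsHermitian) (a b : Fin n → ℝ) :
    a ⬝ᵥ (B *ᵥ b) = b ⬝ᵥ (B *ᵥ a) := by
  rw [dotProduct_mulVec, ← mulVec_transpose, dotProduct_comm]
  congr 1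
  rw [show Bᵀ = B from by
    have := hB; rwa [Matrix.IsHermitian, conjTranspose_eq_transpose_of_trivial] at this]

lemma dot_sum {ι : Type*} (g : Fin n → ℝ) (s : Finset ι) (f : ι → Fin n → ℝ) :
    g ⬝ᵥ (∑ i ∈ s, f i) = ∑ i ∈ s, g ⬝ᵥ f i := by
  simp only [dotProduct, Finset.sum_apply, Finset.mul_sum]
  exact Finset.sum_comm

lemma mulVec_sum' {ι : Type*} (B : Matrix (Fin n) (Fin n) ℝ) (s : Finset ι)
    (f : ι → Fin n → ℝ) : B *ᵥ (∑ i ∈ s, f i) = ∑ i ∈ s, B *ᵥ f i := by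
  simpa only [Matrix.mulVecLin_apply] using map_sum B.mulVecLin f s

lemma hoffman_aux {k : ℕ} (B : Matrix (Fin n) (Fin n) ℝ)
    (hB : B.IsHermitian) (m M : ℝ)
    (hm : IsGLB (Set.range hB.eigenvalues) m)
    (hM : IsLUB (Set.range hB.eigenvalues) M)
    (C : Fin k → Set (Fin n)) (hpart : ∀ v, ∃! i, v ∈ C i)
    (hind : ∀ i, ∀ f : Fin n → ℝ, (∀ v, v ∉ C i → f v = 0) →
      dotProduct f (B.mulVec f) = 0) :
    (M - m) / (-m) ≤ (k : ℝ) := by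
  classical
  -- n is positive
  have hne : Nonempty (Fin n) := by
    by_contra h
    haveI : IsEmpty (Fin n) := not_nonempty_iff.mp h
    have hr : Set.range hB.eigenvalues = ∅ := Set.range_eq_empty _
    rw [hr] at hm
    have : m + 1 ≤ m := hm.2 (fun x hx => hx.elim)
    linarith
  have hmle : ∀ i, m ≤ hB.eigenvalues i := fun i => hm.1 ⟨i, rfl⟩
  -- k is positive
  have hk : 0 < k := by
    obtain ⟨v⟩ := hne
    obtain ⟨i, -, -⟩ := hpart v
    exact i.pos
  rcases lt_or_ge m 0 with hm0 | hm0
  swap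
  · -- degenerate case m ≥ 0
    rcases eq_or_lt_of_le hm0 with hm0' | hm0'
    · rw [← hm0', neg_zero, div_zero]; positivity
    · have hMm : m ≤ M := le_trans (hmle (Classical.arbitrary _))
        (hM.1 ⟨Classical.arbitrary _, rfl⟩)
      have : (M - m) / (-m) ≤ 0 :=
        div_nonpos_iff.mpr (Or.inl ⟨by linarith, by linarith⟩)
      exact le_trans this (by positivity)
  -- main case : m < 0
  -- get the top eigenvector
  obtain ⟨i0, hi0⟩ : ∃ i0, hB.eigenvalues i0 = M := by
    have hfin : (Set.range hB.eigenvalues).Finite := Set.finite_range _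
    have hner : (Set.range hB.eigenvalues).Nonempty := Set.range_nonempty _
    have h1 : sSup (Set.range hB.eigenvalues) = M := hM.csSup_eq hner
    have h2 := hner.csSup_mem hfin
    rw [h1] at h2
    obtain ⟨i0, hi0⟩ := h2
    exact ⟨i0, hi0⟩
  set g : Fin n → ℝ := ⇑(hB.eigenvectorBasis i0) with hgdef
  have hBg : B *ᵥ g = M • g := by
    rw [hgdef, hB.mulVec_eigenvectorBasis, hi0]
  have hgg : g ⬝ᵥ g = 1 := by
    have h1 : ‖hB.eigenvectorBasis i0‖ = 1 := hB.eigenvectorBasis.orthonormal.1 i0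
    have h2 : g ⬝ᵥ g = (inner ℝ (hB.eigenvectorBasis i0) (hB.eigenvectorBasis i0) : ℝ) := by
      simp only [hgdef, dotProduct, PiLp.inner_apply, RCLike.inner_apply, conj_trivial, mul_comm]
    rw [h2, real_inner_self_eq_norm_sq, h1]; norm_num
  set gi : Fin k → Fin n → ℝ := fun i => (C i).indicator g with hgidef
  have hsum : ∑ i, gi i = g := by
    funext v
    obtain ⟨i, hi, huniq⟩ := hpart v
    rw [Finset.sum_apply]
    rw [Finset.sum_eq_single i]
    · simp [hgidef, Set.indicator_of_mem hi]
    · intro j _ hj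
      have : v ∉ C j := fun hvj => hj (huniq j hvj)
      simp [hgidef, Set.indicator_of_notMem this]
    · intro h; exact absurd (Finset.mem_univ i) h
  have hzero : ∀ i, gi i ⬝ᵥ (B *ᵥ gi i) = 0 := fun i =>
    hind i _ (fun v hv => Set.indicator_of_notMem hv g)
  have hggi : ∀ i, g ⬝ᵥ gi i = gi i ⬝ᵥ gi i := by
    intro i
    apply Finset.sum_congr rfl
    intro v _
    by_cases hv : v ∈ C i
    · simp [hgidef, Set.indicator_of_mem hv]
    · simp [hgidef, Set.indicator_of_notMem hv]
  have hW : ∑ i, g ⬝ᵥ gi i = 1 := by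
    rw [← dot_sum g Finset.univ gi, hsum, hgg]
  -- quadratic form of g
  have hqg : g ⬝ᵥ (B *ᵥ g) = M := by
    rw [hBg, dotProduct_smul, smul_eq_mul, hgg, mul_one]
  -- cross terms sum
  have hcross : ∑ i, g ⬝ᵥ (B *ᵥ gi i) = M := by
    have : ∑ i, g ⬝ᵥ (B *ᵥ gi i) = g ⬝ᵥ (B *ᵥ ∑ i, gi i) := by
      rw [mulVec_sum' B Finset.univ gi, dot_sum]
    rw [this, hsum, hqg]
  -- expansion of each quadratic term
  have hexp : ∀ i, (g - (k:ℝ) • gi i) ⬝ᵥ (B *ᵥ (g - (k:ℝ) • gi i))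
      = M - 2*(k:ℝ)*(g ⬝ᵥ (B *ᵥ gi i)) := by
    intro i
    have hs := symm_bilin B hB (gi i) g
    rw [mulVec_sub, mulVec_smul, sub_dotProduct, dotProduct_sub, dotProduct_sub,
      smul_dotProduct, smul_dotProduct, dotProduct_smul, dotProduct_smul, hqg,
      hzero i, hs]
    simp only [smul_eq_mul]
    ring
  have hnorm : ∀ i, (g - (k:ℝ) • gi i) ⬝ᵥ (g - (k:ℝ) • gi i)
      = 1 - (2*(k:ℝ) - (k:ℝ)^2) * (g ⬝ᵥ gi i) := by
    intro i
    rw [sub_dotProduct, dotProduct_sub, dotProduct_sub, smul_dotProduct, smul_dotProduct,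
      dotProduct_smul, dotProduct_smul, hgg, dotProduct_comm (gi i) g, ← hggi i]
    simp only [smul_eq_mul]
    ring
  -- sum the lower bounds
  have hineq : m * ((k:ℝ)^2 - k) ≤ -(k:ℝ) * M := by
    have h1 : ∀ i : Fin k, m * ((g - (k:ℝ) • gi i) ⬝ᵥ (g - (k:ℝ) • gi i))
        ≤ (g - (k:ℝ) • gi i) ⬝ᵥ (B *ᵥ (g - (k:ℝ) • gi i)) :=
      fun i => quad_lb B hB m hmle _
    have h2 := Finset.sum_le_sum (fun i (_ : i ∈ Finset.univ) => h1 i)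
    have h3 : ∑ i : Fin k, m * ((g - (k:ℝ) • gi i) ⬝ᵥ (g - (k:ℝ) • gi i))
        = m * ((k:ℝ)^2 - k) := by
      simp only [hnorm]
      rw [← Finset.mul_sum]
      rw [Finset.sum_sub_distrib, ← Finset.mul_sum, hW, Finset.sum_const,
        Finset.card_univ, Fintype.card_fin]
      ring_nf
    have h4 : ∑ i : Fin k, (g - (k:ℝ) • gi i) ⬝ᵥ (B *ᵥ (g - (k:ℝ) • gi i))
        = -(k:ℝ) * M := by
      simp only [hexp]
      rw [Finset.sum_sub_distrib, ← Finset.mul_sum, hcross, Finset.sum_const,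
        Finset.card_univ, Fintype.card_fin]
      simp only [nsmul_eq_mul]
      ring
    rw [h3, h4] at h2
    exact h2
  -- conclude
  have hkpos : (0:ℝ) < k := by exact_mod_cast hk
  rw [div_le_iff₀ (by linarith : (0:ℝ) < -m)]
  nlinarith [hineq]

end aux

/-- Hoffman's bound for the chromatic number of a nonzero real symmetric matrix:
if the index set partitions into `k` independent sets for `B`, then
`k ≥ (M(B) - m(B)) / (-m(B))`. -/
theorem hoffman_bound_matrix {n k : ℕ} (B : Matrix (Fin n) (Fin n) ℝ)
    (hB : B.IsHermitian) (hB0 : B ≠ 0) (m M : ℝ)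
    (hm : IsGLB (Set.range hB.eigenvalues) m)
    (hM : IsLUB (Set.range hB.eigenvalues) M)
    (C : Fin k → Set (Fin n)) (hpart : ∀ v, ∃! i, v ∈ C i)
    (hind : ∀ i, ∀ f : Fin n → ℝ, (∀ v, v ∉ C i → f v = 0) →
      dotProduct f (B.mulVec f) = 0) :
    (M - m) / (-m) ≤ (k : ℝ) :=
  hoffman_aux B hB m M hm hM C hpart hind
end

section
/- Lovász's spectral bound on the independence ratio: for a finite r-regular graph G on n vertices with r ≥ 1, with adjacency matrix A having smallest eigenvalue m(A) and largest eigenvalue M(A) = r, every independent set I of G satisfies |I|/n ≤ −m(A)/(M(A) − m(A)). -/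
set_option maxHeartbeats 1000000

open Matrix SimpleGraph


/-- Lovász's spectral bound on the independence ratio of a finite `r`-regular
graph: `|I|/n ≤ -m(A) / (M(A) - m(A))` where `M(A) = r`. -/
theorem lovasz_independence_ratio_bound {V : Type*} [Fintype V] [DecidableEq V]
    (G : SimpleGraph V) [DecidableRel G.Adj] (r : ℕ) (hr : 1 ≤ r)
    (hreg : G.IsRegularOfDegree r) (hH : (G.adjMatrix ℝ).IsHermitian)
    (m : ℝ) (hm : IsGLB (Set.range hH.eigenvalues) m)
    (I : Finset V) (hI : ∀ v ∈ I, ∀ w ∈ I, ¬ G.Adj v w) :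
    (I.card : ℝ) / (Fintype.card V : ℝ) ≤ (-m) / ((r : ℝ) - m) := by
  classical
  set A : Matrix V V ℝ := G.adjMatrix ℝ with hAdef
  -- V is nonempty
  have hne : Nonempty V := by
    by_contra h
    rw [not_nonempty_iff] at h
    have h1 : (m + 1) ∈ lowerBounds (Set.range hH.eigenvalues) := by
      rintro z ⟨i, rfl⟩; exact (h.false i).elim
    linarith [hm.2 h1]
  have hNpos : (0 : ℝ) < (Fintype.card V : ℝ) := by
    exact_mod_cast Fintype.card_pos
  have hmle : ∀ i, m ≤ hH.eigenvalues i := fun i => hm.1 ⟨i, rfl⟩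
  -- sum of eigenvalues is the trace, which is 0
  have htr : ∑ i, hH.eigenvalues i = 0 := by
    have : ∑ i, hH.eigenvalues i = A.trace := by
      conv_rhs => rw [hH.spectral_theorem, Unitary.conjStarAlgAut_apply]
      rw [Matrix.trace_mul_cycle]
      rw [(Matrix.mem_unitaryGroup_iff').mp (hH.eigenvectorUnitary).2, Matrix.one_mul,
        Matrix.trace_diagonal]
      simp
    rw [this, hAdef, SimpleGraph.trace_adjMatrix]
  have hm0 : m ≤ 0 := by
    by_contra h
    push_neg at h
    have : (0 : ℝ) < ∑ i, hH.eigenvalues i :=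
      Finset.sum_pos (fun i _ => lt_of_lt_of_le h (hmle i)) Finset.univ_nonempty
    linarith
  have hr1 : (1 : ℝ) ≤ (r : ℝ) := by exact_mod_cast hr
  have hrm : (0 : ℝ) < (r : ℝ) - m := by linarith
  -- A - m • 1 is positive semidefinite
  have hPSD : (A - m • 1).PosSemidef := by
    have hU : (hH.eigenvectorUnitary : Matrix V V ℝ) *
        star (hH.eigenvectorUnitary : Matrix V V ℝ) = 1 :=
      (Matrix.mem_unitaryGroup_iff).mp (hH.eigenvectorUnitary).2
    have key : A - m • 1 = (hH.eigenvectorUnitary : Matrix V V ℝ) *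
        diagonal (fun i => hH.eigenvalues i - m) *
        star (hH.eigenvectorUnitary : Matrix V V ℝ) := by
      conv_lhs => rw [hH.spectral_theorem, Unitary.conjStarAlgAut_apply]
      have h1 : (m • (1 : Matrix V V ℝ)) = (hH.eigenvectorUnitary : Matrix V V ℝ) *
          (m • 1) * star (hH.eigenvectorUnitary : Matrix V V ℝ) := by
        rw [mul_smul_comm, mul_one, smul_mul_assoc, hU]
      rw [h1, ← sub_mul, ← mul_sub]
      congr 2
      ext i j
      simp [diagonal, Matrix.one_apply, Matrix.smul_apply]
      split <;> simp
    rw [key, Matrix.star_eq_conjTranspose]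
    exact (PosSemidef.diagonal (fun i => by simpa using hmle i)).mul_mul_conjTranspose_same _
  -- the test vector
  set K : ℝ := (I.card : ℝ) with hK
  set N : ℝ := (Fintype.card V : ℝ) with hN
  set x : V → ℝ := fun v => if v ∈ I then 1 else 0 with hx
  set o : V → ℝ := fun _ => 1 with ho
  have hxsum : ∑ v, x v = K := by
    simp [hx, Finset.sum_ite_mem, hK]
  -- basic dot products
  have pxx : x ⬝ᵥ x = K := by
    simp only [dotProduct, hx]
    rw [← hxsum]
    refine Finset.sum_congr rfl fun v _ => ?_
    by_cases hv : v ∈ I <;> simp [hx, hv]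
  have pxo : x ⬝ᵥ o = K := by
    simpa [dotProduct, ho] using hxsum
  have pox : o ⬝ᵥ x = K := by
    simpa [dotProduct, ho] using hxsum
  have poo : o ⬝ᵥ o = N := by
    simp [dotProduct, ho, hN, Finset.card_univ]
  -- adjacency products
  have hAo : A *ᵥ o = fun _ => (r : ℝ) := by
    ext v
    simp [hAdef, ho, hreg v]
  have dxo : x ⬝ᵥ (A *ᵥ o) = K * r := by
    rw [hAo]
    simp only [dotProduct]
    rw [← Finset.sum_mul, hxsum]
  have doo : o ⬝ᵥ (A *ᵥ o) = N * r := by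
    rw [hAo]
    simp [dotProduct, ho, hN, Finset.card_univ, Finset.sum_const, nsmul_eq_mul]
  have dox : o ⬝ᵥ (A *ᵥ x) = K * r := by
    rw [Matrix.dotProduct_mulVec]
    have : o ᵥ* A = fun _ => (r : ℝ) := by
      ext v
      simp [hAdef, ho, hreg v]
    rw [this]
    simp only [dotProduct]
    rw [← Finset.mul_sum, hxsum, mul_comm]
  have dxx : x ⬝ᵥ (A *ᵥ x) = 0 := by
    simp only [dotProduct, hAdef, SimpleGraph.adjMatrix_mulVec_apply]
    refine Finset.sum_eq_zero fun v _ => ?_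
    by_cases hv : v ∈ I
    · simp only [hx, hv, if_true, one_mul]
      refine Finset.sum_eq_zero fun u hu => ?_
      rw [SimpleGraph.mem_neighborFinset] at hu
      have : u ∉ I := fun h => hI v hv u h hu
      simp [this]
    · simp [hx, hv]
  -- the quadratic form inequality
  set y : V → ℝ := N • x - K • o with hy
  have hQ : 0 ≤ y ⬝ᵥ ((A - m • 1) *ᵥ y) := by
    have := hPSD.dotProduct_mulVec_nonneg y
    simpa using this
  have hexp : y ⬝ᵥ ((A - m • 1) *ᵥ y) =
      (N * N * (x ⬝ᵥ (A *ᵥ x)) - N * K * (x ⬝ᵥ (A *ᵥ o)) - K * N * (o ⬝ᵥ (A *ᵥ x))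
        + K * K * (o ⬝ᵥ (A *ᵥ o)))
      - m * (N * N * (x ⬝ᵥ x) - N * K * (x ⬝ᵥ o) - K * N * (o ⬝ᵥ x) + K * K * (o ⬝ᵥ o)) := by
    simp only [hy, Matrix.sub_mulVec, Matrix.mulVec_sub, Matrix.mulVec_smul,
      Matrix.smul_mulVec, Matrix.one_mulVec, sub_dotProduct,
      dotProduct_sub, smul_dotProduct, dotProduct_smul, smul_eq_mul]
    ring
  rw [hexp, dxx, dxo, dox, doo, pxx, pxo, pox, poo] at hQ
  -- conclude
  have hKnn : 0 ≤ K := by positivity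
  rw [div_le_div_iff₀ hNpos hrm]
  rcases eq_or_lt_of_le hKnn with hK0 | hKpos
  · rw [← hK0]
    nlinarith [mul_nonneg (neg_nonneg.2 hm0) hNpos.le]
  · have h2 : N * K * (K * ((r : ℝ) - m) + m * N) ≤ 0 := by nlinarith [hQ]
    by_contra hcon
    push_neg at hcon
    have h3 : 0 < K * ((r : ℝ) - m) + m * N := by linarith
    nlinarith [mul_pos (mul_pos hNpos hKpos) h3]
end

section
/- Hoffman's bound for the chromatic number of a finite graph: if G is a finite graph with at least one edge, adjacency matrix A, smallest eigenvalue m(A), and largest eigenvalue M(A), then χ(G) ≥ (M(A) − m(A))/(−m(A)). -/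
open Matrix Pointwise Complex


private lemma hoffman_qf_real {V : Type*} [Fintype V] [DecidableEq V]
    (A : Matrix V V ℝ) (hH : A.IsHermitian)
    (m : ℝ) (hm : ∀ i, m ≤ hH.eigenvalues i) (x : V → ℝ) :
    m * ∑ v, x v ^ 2 ≤ ∑ u, ∑ v, A u v * x u * x v := by
  set B := A - algebraMap ℝ (Matrix V V ℝ) m with hB
  have hBH : B.IsHermitian := by
    apply hH.sub
    rw [Matrix.algebraMap_eq_diagonal]
    exact Matrix.isHermitian_diagonal _
  have hspec : spectrum ℝ B = spectrum ℝ A - {m} := (spectrum.sub_singleton_eq A m).symm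
  have hpsd : B.PosSemidef := by
    apply hBH.posSemidef_iff_eigenvalues_nonneg.mpr
    simp only [Pi.le_def, Pi.zero_apply]
    intro i
    have h1 : hBH.eigenvalues i ∈ spectrum ℝ B := hBH.eigenvalues_mem_spectrum_real i
    rw [hspec, hH.spectrum_real_eq_range_eigenvalues] at h1
    obtain ⟨a, ⟨j, rfl⟩, b, hb, hab⟩ := Set.mem_sub.mp h1
    simp only [Set.mem_singleton_iff] at hb
    subst hb
    linarith [hm j]
  have hq := hpsd.dotProduct_mulVec_nonneg x
  simp only [star_trivial] at hq
  have heq : x ⬝ᵥ B.mulVec x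
      = (∑ u, ∑ v, A u v * x u * x v) - m * ∑ v, x v ^ 2 := by
    rw [hB, Matrix.sub_mulVec, dotProduct_sub, Matrix.algebraMap_eq_diagonal]
    congr 1
    · simp only [dotProduct, Matrix.mulVec, dotProduct, Finset.mul_sum]
      exact Finset.sum_congr rfl fun u _ => Finset.sum_congr rfl fun v _ => by ring
    · simp only [dotProduct, mulVec_diagonal, Finset.mul_sum, Pi.algebraMap_apply,
        algebraMap_apply, Algebra.algebraMap_self_apply]
      exact Finset.sum_congr rfl fun v _ => by ring
  linarith [heq ▸ hq]

private lemma hoffman_qf_complex {V : Type*} [Fintype V] [DecidableEq V]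
    (A : Matrix V V ℝ) (hH : A.IsHermitian)
    (m : ℝ) (hm : ∀ i, m ≤ hH.eigenvalues i) (y : V → ℂ) :
    m * ∑ v, Complex.normSq (y v)
      ≤ (∑ u, ∑ v, (A u v : ℂ) * ((starRingEnd ℂ) (y u) * y v)).re := by
  have hre : (∑ u, ∑ v, (A u v : ℂ) * ((starRingEnd ℂ) (y u) * y v)).re
      = (∑ u, ∑ v, A u v * ((y u).re * (y v).re))
        + (∑ u, ∑ v, A u v * ((y u).im * (y v).im)) := by
    rw [Complex.re_sum, ← Finset.sum_add_distrib]
    refine Finset.sum_congr rfl fun u _ => ?_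
    rw [Complex.re_sum, ← Finset.sum_add_distrib]
    refine Finset.sum_congr rfl fun v _ => ?_
    simp [Complex.mul_re, Complex.mul_im]
    ring
  have h1 := hoffman_qf_real A hH m hm (fun v => (y v).re)
  have h2 := hoffman_qf_real A hH m hm (fun v => (y v).im)
  have hns : ∑ v, Complex.normSq (y v) = (∑ v, (y v).re ^ 2) + ∑ v, (y v).im ^ 2 := by
    rw [← Finset.sum_add_distrib]
    exact Finset.sum_congr rfl fun v _ => by simp [Complex.normSq_apply]; ring
  rw [hre, hns]
  have e1 : ∑ u, ∑ v, A u v * ((y u).re * (y v).re)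
      = ∑ u, ∑ v, A u v * (y u).re * (y v).re :=
    Finset.sum_congr rfl fun u _ => Finset.sum_congr rfl fun v _ => by ring
  have e2 : ∑ u, ∑ v, A u v * ((y u).im * (y v).im)
      = ∑ u, ∑ v, A u v * (y u).im * (y v).im :=
    Finset.sum_congr rfl fun u _ => Finset.sum_congr rfl fun v _ => by ring
  rw [e1, e2]
  linarith

/-- Hoffman's bound for the chromatic number of a finite graph with at least one
edge: `χ(G) ≥ (M(A) - m(A)) / (-m(A))`. -/
theorem hoffman_chromatic_bound {V : Type*} [Fintype V] [DecidableEq V]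
    (G : SimpleGraph V) [DecidableRel G.Adj] (hE : G ≠ ⊥)
    (hH : (G.adjMatrix ℝ).IsHermitian) (m M : ℝ)
    (hm : IsGLB (Set.range hH.eigenvalues) m)
    (hM : IsLUB (Set.range hH.eigenvalues) M) :
    ∀ c : ℕ, G.Colorable c → (M - m) / (-m) ≤ (c : ℝ) := by
  set A := G.adjMatrix ℝ with hA
  -- an edge exists
  obtain ⟨u₀, v₀, huv⟩ : ∃ u v, G.Adj u v := by
    by_contra h
    push_neg at h
    exact hE (by ext u v; simp [h u v])
  have hne : u₀ ≠ v₀ := G.ne_of_adj huv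
  have hm' : ∀ i, m ≤ hH.eigenvalues i := fun i => hm.1 ⟨i, rfl⟩
  -- m ≤ -1
  have hmneg : m ≤ -1 := by
    set x : V → ℝ := fun w => (if w = u₀ then 1 else 0) - (if w = v₀ then 1 else 0) with hx
    have key := hoffman_qf_real A hH m hm' x
    have h1 : ∑ v, x v ^ 2 = 2 := by
      have : ∀ w, x w ^ 2 = (if w = u₀ then 1 else 0) + (if w = v₀ then 1 else 0) := by
        intro w
        simp only [hx]
        by_cases h1 : w = u₀
        · subst h1; norm_num [hne]
        · by_cases h2 : w = v₀
          · subst h2; norm_num [h1]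
          · norm_num [h1, h2]
      rw [Finset.sum_congr rfl fun w _ => this w, Finset.sum_add_distrib]
      simp
      norm_num
    have h2 : ∑ u, ∑ v, A u v * x u * x v = -2 := by
      have : ∀ u v, A u v * x u * x v =
          (A u v * (if u = u₀ then 1 else 0) * (if v = u₀ then 1 else 0)
          - A u v * (if u = u₀ then 1 else 0) * (if v = v₀ then 1 else 0))
          - (A u v * (if u = v₀ then 1 else 0) * (if v = u₀ then 1 else 0)
          - A u v * (if u = v₀ then 1 else 0) * (if v = v₀ then 1 else 0)) := by
        intro u v; simp only [hx]; ring
      rw [Finset.sum_congr rfl fun u _ => Finset.sum_congr rfl fun v _ => this u v]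
      simp only [Finset.sum_sub_distrib]
      simp only [mul_ite, ite_mul, mul_one, mul_zero, zero_mul, one_mul,
        Finset.sum_ite_eq', Finset.mem_univ, if_true]
      simp [hA, SimpleGraph.adjMatrix_apply, huv, huv.symm, hne, Ne.symm hne]
      norm_num
    rw [h1, h2] at key
    linarith
  have hmlt : m < 0 := by linarith
  -- M is attained
  have hMmem : M ∈ Set.range hH.eigenvalues := by
    have hne' : (Set.range hH.eigenvalues).Nonempty := ⟨_, ⟨u₀, rfl⟩⟩
    have := Set.Nonempty.csSup_mem hne' (Set.finite_range _)
    rwa [hM.csSup_eq hne'] at this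
  obtain ⟨i, hi⟩ := hMmem
  set x : V → ℝ := ⇑(hH.eigenvectorBasis i) with hxdef
  have hx1 : A.mulVec x = M • x := by
    rw [hxdef, hH.mulVec_eigenvectorBasis, hi]
  have hx2 : ∑ v, x v ^ 2 = 1 := by
    have hn := hH.eigenvectorBasis.orthonormal.1 i
    rw [EuclideanSpace.norm_eq] at hn
    have := Real.sqrt_eq_one.mp hn
    simpa [Real.norm_eq_abs, _root_.sq_abs] using this
  have hx3 : ∑ u, ∑ v, A u v * x u * x v = M := by
    have : ∀ u, ∑ v, A u v * x u * x v = x u * (A.mulVec x u) := by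
      intro u
      simp only [Matrix.mulVec, dotProduct, Finset.mul_sum]
      exact Finset.sum_congr rfl fun v _ => by ring
    rw [Finset.sum_congr rfl fun u _ => this u]
    rw [hx1]
    simp only [Pi.smul_apply, smul_eq_mul]
    rw [Finset.sum_congr rfl (fun u _ => by ring : ∀ u ∈ Finset.univ, x u * (M * x u) = M * x u ^ 2),
      ← Finset.mul_sum, hx2, mul_one]
  intro c hc
  obtain ⟨C⟩ := hc
  rcases Nat.eq_zero_or_pos c with hc0 | hc0
  · subst hc0; exact (C u₀).elim0
  -- roots of unity twisted vectors
  set θ : ℕ → V → ℝ := fun l v => 2 * Real.pi * l * ((C v : ℕ) : ℝ) / c with hθ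
  set y : ℕ → V → ℂ := fun l v => Complex.exp ((θ l v : ℂ) * Complex.I) * (x v : ℂ) with hy
  set T : ℕ → ℂ := fun l => ∑ u, ∑ v, ((A u v : ℝ) : ℂ) * ((starRingEnd ℂ) (y l u) * y l v)
    with hT
  -- each T l has real part at least m
  have hTre : ∀ l, m ≤ (T l).re := by
    intro l
    have h := hoffman_qf_complex A hH m hm' (y l)
    have hns : ∑ v, Complex.normSq (y l v) = 1 := by
      have hv : ∀ v, Complex.normSq (y l v) = x v ^ 2 := by
        intro v
        rw [hy]
        rw [Complex.normSq_mul, ← Complex.sq_norm (Complex.exp _),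
          Complex.norm_exp_ofReal_mul_I]
        simp [Complex.normSq_ofReal]
        ring
      rw [Finset.sum_congr rfl fun v _ => hv v, hx2]
    rw [hns, mul_one] at h
    exact h
  -- T 0 is M
  have hT0 : T 0 = (M : ℂ) := by
    have hy0 : ∀ v, y 0 v = (x v : ℂ) := by
      intro v
      simp [hy, hθ]
    rw [hT]
    simp only [hy0, Complex.conj_ofReal]
    rw [← hx3]
    push_cast
    ring_nf
  -- sum over all l is zero
  have hSum0 : ∑ l ∈ Finset.range c, T l = 0 := by
    rw [hT, Finset.sum_comm]
    refine Finset.sum_eq_zero fun u _ => ?_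
    rw [Finset.sum_comm]
    refine Finset.sum_eq_zero fun v _ => ?_
    by_cases hadj : G.Adj u v
    · have hCuv : C u ≠ C v := C.valid hadj
      set ψ : ℝ := 2 * Real.pi * (((C v : ℕ) : ℝ) - ((C u : ℕ) : ℝ)) / c with hψ
      set z : ℂ := Complex.exp ((ψ : ℂ) * Complex.I) with hz
      have hcC : (c : ℝ) ≠ 0 := by positivity
      have hcC2 : (c : ℂ) ≠ 0 := Nat.cast_ne_zero.mpr hc0.ne'
      have hterm : ∀ l, (starRingEnd ℂ) (y l u) * y l v
          = ((x u * x v : ℝ) : ℂ) * z ^ l := by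
        intro l
        have h2 : Complex.exp (((θ l u : ℝ) : ℂ) * -Complex.I)
            * Complex.exp (((θ l v : ℝ) : ℂ) * Complex.I) = z ^ l := by
          rw [← Complex.exp_add, hz, ← Complex.exp_nat_mul]
          congr 1
          simp only [hθ, hψ]
          push_cast
          field_simp [hcC2]
          ring
        have h1 : (starRingEnd ℂ) (y l u)
            = Complex.exp (((θ l u : ℝ) : ℂ) * -Complex.I) * (x u : ℂ) := by
          simp only [hy, _root_.map_mul, ← Complex.exp_conj, Complex.conj_ofReal, Complex.conj_I]
        rw [h1, hy, ← h2]
        push_cast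
        ring
      have hCuvval : ((C u : ℕ) : ℝ) ≠ ((C v : ℕ) : ℝ) := by
        exact_mod_cast fun h => hCuv (Fin.val_injective (by exact_mod_cast h))
      have hz1 : z ≠ 1 := by
        intro h
        rw [hz, Complex.exp_eq_one_iff] at h
        obtain ⟨n, hn⟩ := h
        have hψn : (ψ : ℂ) = (n : ℂ) * (2 * Real.pi) := by
          have := mul_right_cancel₀ Complex.I_ne_zero (by rw [hn]; ring :
            (ψ : ℂ) * Complex.I = ((n : ℂ) * (2 * Real.pi)) * Complex.I)
          exact this
        have hψr : ψ = (n : ℝ) * (2 * Real.pi) := by exact_mod_cast hψn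
        rw [hψ] at hψr
        have hdiff : ((C v : ℕ) : ℝ) - ((C u : ℕ) : ℝ) = (n : ℝ) * c := by
          have hpi := Real.pi_ne_zero
          field_simp at hψr
          nlinarith [hψr, Real.pi_pos]
        have hub : |((C v : ℕ) : ℝ) - ((C u : ℕ) : ℝ)| < c := by
          have h1 : ((C v : ℕ) : ℝ) < c := by exact_mod_cast (C v).isLt
          have h2 : ((C u : ℕ) : ℝ) < c := by exact_mod_cast (C u).isLt
          have h3 : (0:ℝ) ≤ ((C v : ℕ) : ℝ) := by positivity
          have h4 : (0:ℝ) ≤ ((C u : ℕ) : ℝ) := by positivity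
          rw [abs_lt]; constructor <;> linarith
        have hcpos : (0:ℝ) < c := by positivity
        have hn0 : n = 0 := by
          have habs : |(n : ℝ) * c| < c := by rw [← hdiff]; exact hub
          rw [abs_mul, abs_of_pos hcpos] at habs
          have hlt : |(n : ℝ)| < 1 := by
            by_contra hcon
            push_neg at hcon
            nlinarith
          have hlt2 : -1 < (n:ℝ) ∧ (n:ℝ) < 1 := abs_lt.mp hlt
          have : -1 < n ∧ n < 1 := by exact_mod_cast hlt2
          omega
        rw [hn0] at hdiff
        simp at hdiff
        exact hCuvval (by linarith)
      have hzc : z ^ c = 1 := by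
        rw [hz, ← Complex.exp_nat_mul]
        have : (c : ℂ) * ((ψ : ℂ) * Complex.I)
            = ((((C v : ℕ) : ℤ) - ((C u : ℕ) : ℤ) : ℤ) : ℂ) * (2 * Real.pi * Complex.I) := by
          rw [hψ]
          push_cast
          field_simp [hcC2]
        rw [this, Complex.exp_int_mul_two_pi_mul_I]
      have hgeom : ∑ l ∈ Finset.range c, z ^ l = 0 := by
        rw [geom_sum_eq hz1, hzc]
        simp
      calc ∑ l ∈ Finset.range c, ((A u v : ℝ) : ℂ) * ((starRingEnd ℂ) (y l u) * y l v)
          = ∑ l ∈ Finset.range c, ((A u v : ℝ) : ℂ) * ((x u * x v : ℝ) : ℂ) * z ^ l := by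
            refine Finset.sum_congr rfl fun l _ => ?_
            rw [hterm l]
            ring
        _ = ((A u v : ℝ) : ℂ) * ((x u * x v : ℝ) : ℂ) * ∑ l ∈ Finset.range c, z ^ l := by
            rw [Finset.mul_sum]
        _ = 0 := by rw [hgeom, mul_zero]
    · refine Finset.sum_eq_zero fun l _ => ?_
      simp [hA, SimpleGraph.adjMatrix_apply, hadj]
  -- combine
  have hins : Finset.range c = insert 0 ((Finset.range c).erase 0) :=
    (Finset.insert_erase (Finset.mem_range.mpr hc0)).symm
  have hre0 : (0:ℝ) = ∑ l ∈ Finset.range c, (T l).re := by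
    rw [← Complex.re_sum, hSum0, Complex.zero_re]
  rw [hins, Finset.sum_insert (Finset.notMem_erase _ _)] at hre0
  have hT0re : (T 0).re = M := by rw [hT0, Complex.ofReal_re]
  have hcard : ((Finset.range c).erase 0).card = c - 1 := by
    rw [Finset.card_erase_of_mem (Finset.mem_range.mpr hc0), Finset.card_range]
  have hlow : ((c:ℝ) - 1) * m ≤ ∑ l ∈ (Finset.range c).erase 0, (T l).re := by
    have h := Finset.card_nsmul_le_sum ((Finset.range c).erase 0)
      (fun l => (T l).re) m (fun l _ => hTre l)
    rw [hcard, nsmul_eq_mul] at h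
    have hcast : ((c - 1 : ℕ) : ℝ) = (c : ℝ) - 1 := by
      rw [Nat.cast_sub hc0, Nat.cast_one]
    rw [hcast] at h
    exact h
  have hc1 : (1:ℝ) ≤ (c:ℝ) := by exact_mod_cast hc0
  rw [div_le_iff₀ (by linarith : (0:ℝ) < -m)]
  rw [hT0re] at hre0
  nlinarith [hlow, hre0, hmneg, hc1]
end

section
/- Spectral bound for the independence ratio with a near-eigenvector: Let (V, μ) be a probability space and A a nonzero bounded self-adjoint operator on L²(V). Fix R ∈ ℝ and set ε = ‖A 1_V − R·1_V‖, where 1_V is the constant-one function. Let m(A) = inf{⟨Af,f⟩ : ‖f‖=1}. If I ⊆ V is a measurable set with μ(I) > 0 such that ⟨Af,f⟩ = 0 for all f ∈ L²(V) vanishing a.e. outside I, and if R − m(A) − ε > 0, then μ(I) ≤ (−m(A) + 2ε)/(R − m(A) − ε). -/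
open MeasureTheory

set_option maxHeartbeats 1000000 in
/-- Spectral bound for the independence ratio with a near-eigenvector
(Theorem 2.3 in the paper). -/
theorem independence_ratio_bound {V : Type*} [MeasurableSpace V] (μ : Measure V)
    [IsProbabilityMeasure μ]
    (A : Lp ℂ 2 μ →L[ℂ] Lp ℂ 2 μ) (hA0 : A ≠ 0)
    (hsa : ∀ f g : Lp ℂ 2 μ, (inner ℂ (A f) g : ℂ) = inner ℂ f (A g))
    (one : Lp ℂ 2 μ) (hone : ∀ᵐ x ∂μ, one x = 1)
    (R m ε : ℝ) (hε : ε = ‖A one - (R : ℂ) • one‖)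
    (hm : IsGLB {r : ℝ | ∃ f : Lp ℂ 2 μ, ‖f‖ = 1 ∧ r = (inner ℂ (A f) f : ℂ).re} m)
    (I : Set V) (hIm : MeasurableSet I) (hIpos : 0 < μ I)
    (hind : ∀ f : Lp ℂ 2 μ, (∀ᵐ x ∂μ, x ∉ I → f x = 0) → (inner ℂ (A f) f : ℂ) = 0)
    (hden : 0 < R - m - ε) :
    (μ I).toReal ≤ (-m + 2 * ε) / (R - m - ε) := by
  have hIfin : μ I ≠ ⊤ := measure_ne_top μ I
  set α : ℝ := (μ I).toReal with hαdef
  have hα : 0 < α := ENNReal.toReal_pos hIpos.ne' hIfin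
  have hα1 : α ≤ 1 := by
    rw [hαdef]
    simpa using ENNReal.toReal_mono (by simp) (prob_le_one (μ := μ) (s := I))
  set f : Lp ℂ 2 μ := indicatorConstLp 2 hIm hIfin (1 : ℂ) with hfdef
  -- quadratic form lower bound
  have hmle : ∀ g : Lp ℂ 2 μ, m * ‖g‖ ^ 2 ≤ (inner ℂ (A g) g : ℂ).re := by
    intro g
    rcases eq_or_ne g 0 with rfl | hg
    · simp
    · have hng : (0:ℝ) < ‖g‖ := norm_pos_iff.mpr hg
      set u : Lp ℂ 2 μ := ((‖g‖⁻¹ : ℝ) : ℂ) • g with hu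
      have hnu : ‖u‖ = 1 := by
        simp [hu, norm_smul, abs_of_pos (inv_pos.mpr hng), inv_mul_cancel₀ hng.ne']
      have hle := hm.1 ⟨u, hnu, rfl⟩
      have hval0 : (inner ℂ (A u) u : ℂ) = (((‖g‖⁻¹)^2 : ℝ) : ℂ) * inner ℂ (A g) g := by
        rw [hu, A.map_smul, inner_smul_left, inner_smul_right, Complex.conj_ofReal]
        push_cast
        ring
      have hval : (inner ℂ (A u) u : ℂ).re = (‖g‖⁻¹)^2 * (inner ℂ (A g) g : ℂ).re := by
        rw [hval0, Complex.re_ofReal_mul]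
      rw [hval] at hle
      have h2 := mul_le_mul_of_nonneg_left hle (sq_nonneg ‖g‖)
      calc m * ‖g‖^2 = ‖g‖^2 * m := mul_comm _ _
        _ ≤ ‖g‖^2 * ((‖g‖⁻¹)^2 * (inner ℂ (A g) g : ℂ).re) := h2
        _ = (inner ℂ (A g) g : ℂ).re := by
            field_simp
  -- inner product computations
  have hf_one : (inner ℂ f one : ℂ) = (α : ℂ) := by
    rw [hfdef, L2.inner_indicatorConstLp_one hIm hIfin one]
    rw [setIntegral_congr_ae hIm (hone.mono fun x hx _ => hx)]
    simp [hαdef, Measure.real]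
  have hff : (inner ℂ f f : ℂ) = (α : ℂ) := by
    rw [hfdef, L2.inner_indicatorConstLp_one hIm hIfin]
    have hfI : ∀ᵐ x ∂μ, x ∈ I → (indicatorConstLp 2 hIm hIfin (1 : ℂ)) x = 1 :=
      indicatorConstLp_coeFn_mem
    rw [setIntegral_congr_ae hIm (hfI.mono fun x hx hxs => hx hxs)]
    simp [hαdef, Measure.real]
  have hoo : (inner ℂ one one : ℂ) = 1 := by
    rw [L2.inner_def]
    have : ∀ᵐ x ∂μ, (inner ℂ (one x) (one x) : ℂ) = 1 := hone.mono fun x hx => by simp [hx]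
    rw [integral_congr_ae this]
    simp
  have hno : ‖one‖ = 1 := by
    have h2 := inner_self_eq_norm_sq (𝕜 := ℂ) one
    rw [hoo] at h2
    simp only [RCLike.one_re] at h2
    nlinarith [norm_nonneg one]
  have honef : (inner ℂ one f : ℂ) = (α : ℂ) := by
    rw [← inner_conj_symm, hf_one]
    simp
  set g : Lp ℂ 2 μ := f - (α : ℂ) • one with hgdef
  have hog : (inner ℂ one g : ℂ) = 0 := by
    simp [hgdef, inner_sub_right, inner_smul_right, honef, hoo, hno, -Complex.coe_smul]
  have hgo : (inner ℂ g one : ℂ) = 0 := by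
    rw [← inner_conj_symm, hog]; simp
  have hgg : (inner ℂ g g : ℂ) = ((α - α^2 : ℝ) : ℂ) := by
    simp only [hgdef, inner_sub_left, inner_sub_right, inner_smul_left, inner_smul_right,
      hf_one, hff, hoo, honef, Complex.conj_ofReal]
    push_cast
    ring
  have hng2 : ‖g‖ ^ 2 = α - α ^ 2 := by
    have h := inner_self_eq_norm_sq (𝕜 := ℂ) g
    rw [hgg] at h
    simpa [← Complex.ofReal_pow] using h.symm
  have hng1 : ‖g‖ ≤ 1 := by
    nlinarith [norm_nonneg g]
  -- e
  set e : Lp ℂ 2 μ := A one - (R : ℂ) • one with hedef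
  have hAone : A one = (R : ℂ) • one + e := by rw [hedef]; abel
  have hne : ‖e‖ = ε := hε.symm
  have hεnn : 0 ≤ ε := hε ▸ norm_nonneg _
  -- bounds
  have habs : ∀ x y : Lp ℂ 2 μ, -(‖x‖ * ‖y‖) ≤ (inner ℂ x y : ℂ).re := by
    intro x y
    have h1 : |(inner ℂ x y : ℂ).re| ≤ ‖(inner ℂ x y : ℂ)‖ := Complex.abs_re_le_norm _
    have h2 := norm_inner_le_norm (𝕜 := ℂ) x y
    have h3 := abs_le.mp (h1.trans h2)
    linarith [h3.1]
  have hb1 : R - ε ≤ (inner ℂ (A one) one : ℂ).re := by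
    rw [hAone]
    have h' : (inner ℂ ((R:ℂ) • one + e) one : ℂ) = (R:ℂ) + inner ℂ e one := by
      simp [inner_add_left, inner_smul_left, hoo, hno, Complex.conj_ofReal, -Complex.coe_smul]
    rw [h', Complex.add_re, Complex.ofReal_re]
    have h2 := habs e one
    rw [hne, hno, mul_one] at h2
    linarith
  have hb2 : -ε ≤ (inner ℂ (A one) g : ℂ).re := by
    rw [hAone]
    have h' : (inner ℂ ((R:ℂ) • one + e) g : ℂ) = inner ℂ e g := by
      simp [inner_add_left, inner_smul_left, hog, -Complex.coe_smul]
    rw [h']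
    have h2 := habs e g
    rw [hne] at h2
    nlinarith [norm_nonneg g]
  have hb3 : -ε ≤ (inner ℂ (A g) one : ℂ).re := by
    rw [hsa g one, hAone]
    have h' : (inner ℂ g ((R:ℂ) • one + e) : ℂ) = inner ℂ g e := by
      simp [inner_add_right, inner_smul_right, hgo, -Complex.coe_smul]
    rw [h']
    have h2 := habs g e
    rw [hne] at h2
    nlinarith [norm_nonneg g]
  have hb4 : m * (α - α^2) ≤ (inner ℂ (A g) g : ℂ).re := by
    have h := hmle g
    rwa [hng2] at h
  -- independence
  have hsupp : ∀ᵐ x ∂μ, x ∉ I → f x = 0 := by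
    rw [hfdef]
    exact indicatorConstLp_coeFn_notMem
  have hZ0 : (inner ℂ (A f) f : ℂ) = 0 := hind f hsupp
  have hfg : f = (α : ℂ) • one + g := by
    rw [hgdef]; abel
  have hexp : (inner ℂ (A f) f : ℂ)
      = (((α^2 : ℝ)) : ℂ) * inner ℂ (A one) one + (α : ℂ) * inner ℂ (A one) g
        + (α : ℂ) * inner ℂ (A g) one + inner ℂ (A g) g := by
    conv_lhs => rw [hfg]
    rw [map_add, A.map_smul]
    simp only [inner_add_left, inner_add_right, inner_smul_left, inner_smul_right,
      Complex.conj_ofReal]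
    push_cast
    ring
  have hre : 0 = α^2 * (inner ℂ (A one) one : ℂ).re + α * (inner ℂ (A one) g : ℂ).re
      + α * (inner ℂ (A g) one : ℂ).re + (inner ℂ (A g) g : ℂ).re := by
    have h := congrArg Complex.re (hZ0.symm.trans hexp)
    simpa [← Complex.ofReal_pow, Complex.re_ofReal_mul] using h
  have k1 := mul_le_mul_of_nonneg_left hb1 (sq_nonneg α)
  have k2 := mul_le_mul_of_nonneg_left hb2 hα.le
  have k3 := mul_le_mul_of_nonneg_left hb3 hα.le
  have key : α^2 * (R - ε) + α * (-ε) + α * (-ε) + m * (α - α^2) ≤ 0 := by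
    linarith [hre, k1, k2, k3, hb4]
  rw [le_div_iff₀ hden]
  nlinarith [key, hα, hα1, mul_pos hα hα]
end

section
/- Hoffman-type bound for the chromatic number of an operator: let A be a nonzero bounded self-adjoint operator on L²(V) for a measure space (V, Σ, μ), with m(A) = inf{⟨Af,f⟩ : ‖f‖=1} and M(A) = sup{⟨Af,f⟩ : ‖f‖=1}. If V can be partitioned into k measurable sets C₁,...,Cₖ each independent for A (and each of positive measure without loss of generality), then k ≥ (M(A) − m(A))/(−m(A)). -/
open MeasureTheory

private lemma Lp_coeFn_sum {α E : Type*} [MeasurableSpace α] {μ : Measure α}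
    [NormedAddCommGroup E] {p : ENNReal} {ι : Type*} (s : Finset ι) (f : ι → Lp E p μ) :
    ⇑(∑ i ∈ s, f i) =ᵐ[μ] fun x => ∑ i ∈ s, f i x := by
  classical
  induction s using Finset.induction_on with
  | empty => simp only [Finset.sum_empty]; exact Lp.coeFn_zero E p μ
  | insert a s hnot ih =>
    rw [Finset.sum_insert hnot]
    filter_upwards [Lp.coeFn_add (f a) (∑ i ∈ s, f i), ih] with x hx hx2
    simp only [Finset.sum_insert hnot]
    rw [hx, Pi.add_apply, hx2]

set_option maxHeartbeats 2000000 in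
/-- Hoffman-type bound for the chromatic number of a nonzero bounded
self-adjoint operator on `L²(V)`: if `V` partitions into `k` measurable
independent sets, then `k ≥ (M(A) - m(A)) / (-m(A))`. -/
theorem hoffman_bound_operator {V : Type*} [MeasurableSpace V] (μ : Measure V)
    (A : Lp ℂ 2 μ →L[ℂ] Lp ℂ 2 μ) (hA0 : A ≠ 0)
    (hsa : ∀ f g : Lp ℂ 2 μ, (inner ℂ (A f) g : ℂ) = inner ℂ f (A g))
    (m M : ℝ)
    (hm : IsGLB {r : ℝ | ∃ f : Lp ℂ 2 μ, ‖f‖ = 1 ∧ r = (inner ℂ (A f) f : ℂ).re} m)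
    (hM : IsLUB {r : ℝ | ∃ f : Lp ℂ 2 μ, ‖f‖ = 1 ∧ r = (inner ℂ (A f) f : ℂ).re} M)
    (k : ℕ) (C : Fin k → Set V) (hCm : ∀ i, MeasurableSet (C i))
    (hCpos : ∀ i, 0 < μ (C i))
    (hpart : ∀ x : V, ∃! i, x ∈ C i)
    (hind : ∀ i, ∀ f : Lp ℂ 2 μ, (∀ᵐ x ∂μ, x ∉ C i → f x = 0) →
      (inner ℂ (A f) f : ℂ) = 0) :
    (M - m) / (-m) ≤ (k : ℝ) := by
  classical
  set S := {r : ℝ | ∃ f : Lp ℂ 2 μ, ‖f‖ = 1 ∧ r = (inner ℂ (A f) f : ℂ).re} with hSdef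
  -- the set is nonempty
  have hne : S.Nonempty := by
    by_contra h
    rw [Set.not_nonempty_iff_eq_empty] at h
    have h1 : M ≤ M - 1 := hM.2 (by simp [h, upperBounds])
    linarith
  have hMm : m ≤ M := by
    obtain ⟨r, hr⟩ := hne
    exact le_trans (hm.1 hr) (hM.1 hr)
  -- k ≥ 1
  have hk : 1 ≤ k := by
    by_contra hk0
    push_neg at hk0
    interval_cases k
    have hV : IsEmpty V := ⟨fun x => (hpart x).exists.elim fun i _ => i.elim0⟩
    obtain ⟨r, f, hf1, _⟩ := hne
    have : f = 0 := Lp.ext (Filter.Eventually.of_forall fun x => (hV.false x).elim)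
    rw [this, norm_zero] at hf1
    norm_num at hf1
  rcases lt_trichotomy m 0 with hmneg | hm0 | hmpos
  · -- main case : m < 0
    -- lower bound on the quadratic form
    have hlow : ∀ g : Lp ℂ 2 μ, m * ‖g‖ ^ 2 ≤ (inner ℂ (A g) g : ℂ).re := by
      intro g
      rcases eq_or_ne g 0 with rfl | hg
      · simp
      · have hcpos : (0 : ℝ) < ‖g‖ := norm_pos_iff.mpr hg
        set u : Lp ℂ 2 μ := ((‖g‖⁻¹ : ℝ) : ℂ) • g with hu_def
        have hu : ‖u‖ = 1 := by
          rw [hu_def, norm_smul]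
          simp [Complex.norm_real, abs_of_pos (inv_pos.mpr hcpos)]
          field_simp
        have h1 : m ≤ (inner ℂ (A u) u : ℂ).re := hm.1 ⟨u, hu, rfl⟩
        have h2 : (inner ℂ (A u) u : ℂ).re = ‖g‖⁻¹ ^ 2 * (inner ℂ (A g) g : ℂ).re := by
          rw [hu_def, A.map_smul, inner_smul_left, inner_smul_right,
            Complex.conj_ofReal, ← mul_assoc, ← Complex.ofReal_mul,
            Complex.re_ofReal_mul]
          ring
        rw [h2] at h1
        have h3 : m * ‖g‖ ^ 2 ≤ ‖g‖⁻¹ ^ 2 * (inner ℂ (A g) g : ℂ).re * ‖g‖ ^ 2 := by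
          nlinarith [sq_nonneg ‖g‖]
        calc m * ‖g‖ ^ 2 ≤ ‖g‖⁻¹ ^ 2 * (inner ℂ (A g) g : ℂ).re * ‖g‖ ^ 2 := h3
          _ = (inner ℂ (A g) g : ℂ).re := by
              field_simp
    -- the key upper bound on the numerical range
    have hub : ∀ r ∈ S, r ≤ ((k : ℝ) - 1) * (-m) := by
      rintro r ⟨f, hf1, rfl⟩
      set F : Fin k → Lp ℂ 2 μ :=
        fun i => MemLp.toLp _ ((Lp.memLp f).indicator (hCm i)) with hFdef
      have hcoe : ∀ i, ⇑(F i) =ᵐ[μ] (C i).indicator ⇑f := fun i => MemLp.coeFn_toLp _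
      have hcoeall : ∀ᵐ x ∂μ, ∀ i, F i x = (C i).indicator (⇑f) x :=
        (ae_all_iff).2 hcoe
      -- decomposition of f
      have hsum : ∑ i, F i = f := by
        apply Lp.ext
        filter_upwards [Lp_coeFn_sum Finset.univ F, hcoeall] with x hx hx2
        rw [hx]
        rw [Finset.sum_congr rfl fun i _ => hx2 i]
        obtain ⟨i0, hi0, huniq⟩ := hpart x
        rw [Finset.sum_eq_single i0]
        · exact Set.indicator_of_mem hi0 _
        · intro j _ hji
          exact Set.indicator_of_notMem (fun hxj => hji (huniq j hxj)) _
        · intro h; exact absurd (Finset.mem_univ i0) h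
      -- orthogonality
      have horth : ∀ i j, i ≠ j → (inner ℂ (F i) (F j) : ℂ) = 0 := by
        intro i j hij
        rw [MeasureTheory.L2.inner_def]
        apply integral_eq_zero_of_ae
        filter_upwards [hcoe i, hcoe j] with x hxi hxj
        rw [Pi.zero_apply, hxi, hxj]
        by_cases hx : x ∈ C i
        · have hxnj : x ∉ C j := fun hxj' => hij ((hpart x).unique hx hxj')
          rw [Set.indicator_of_notMem hxnj, inner_zero_right]
        · rw [Set.indicator_of_notMem hx, inner_zero_left]
      -- Pythagoras
      have hnormsum : ∑ i, ‖F i‖ ^ 2 = 1 := by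
        have h1 : (inner ℂ f f : ℂ) = ∑ i, (inner ℂ (F i) (F i) : ℂ) := by
          conv_lhs => rw [← hsum]
          rw [sum_inner]
          refine Finset.sum_congr rfl fun i _ => ?_
          rw [inner_sum, Finset.sum_eq_single i]
          · intro j _ hji
            exact horth i j fun h => hji h.symm
          · intro h; exact absurd (Finset.mem_univ i) h
        have h2 := congrArg Complex.re h1
        rw [Complex.re_sum] at h2
        have h3 : ∀ i : Fin k, (inner ℂ (F i) (F i) : ℂ).re = ‖F i‖ ^ 2 := fun i => by
          have := @inner_self_eq_norm_sq ℂ _ _ _ _ (F i)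
          simpa using this
        have h4 : (inner ℂ f f : ℂ).re = ‖f‖ ^ 2 := by
          have := @inner_self_eq_norm_sq ℂ _ _ _ _ f
          simpa using this
        rw [h4, hf1] at h2
        rw [Finset.sum_congr rfl fun i _ => h3 i] at h2
        simpa using h2.symm
      -- diagonal terms vanish
      have hdiag : ∀ i, (inner ℂ (A (F i)) (F i) : ℂ) = 0 := by
        intro i
        apply hind i (F i)
        filter_upwards [hcoe i] with x hx hxn
        rw [hx, Set.indicator_of_notMem hxn]
      -- symmetry of the real parts
      have hsym : ∀ i j, (inner ℂ (A (F i)) (F j) : ℂ).re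
          = (inner ℂ (A (F j)) (F i) : ℂ).re := by
        intro i j
        rw [hsa, ← inner_conj_symm, Complex.conj_re]
      -- pairwise bound
      have hpairb : ∀ i j, i ≠ j →
          (inner ℂ (A (F i)) (F j) : ℂ).re ≤ -m * (‖F i‖ ^ 2 + ‖F j‖ ^ 2) / 2 := by
        intro i j hij
        have hg := hlow (F i - F j)
        have hnorm : ‖F i - F j‖ ^ 2 = ‖F i‖ ^ 2 + ‖F j‖ ^ 2 := by
          have := @norm_sub_sq ℂ _ _ _ _ (F i) (F j)
          rw [horth i j hij] at this
          simpa using this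
        have hexp : (inner ℂ (A (F i - F j)) (F i - F j) : ℂ)
            = -(inner ℂ (A (F i)) (F j) : ℂ) - (inner ℂ (A (F j)) (F i) : ℂ) := by
          rw [map_sub, inner_sub_left, inner_sub_right, inner_sub_right,
            hdiag, hdiag]
          ring
        have hre : (inner ℂ (A (F i - F j)) (F i - F j) : ℂ).re
            = -2 * (inner ℂ (A (F i)) (F j) : ℂ).re := by
          rw [hexp]
          simp [Complex.sub_re, Complex.neg_re, ← hsym i j]
          ring
        rw [hnorm] at hg
        rw [hre] at hg
        linarith
      -- expand the quadratic form
      have hexpand : (inner ℂ (A f) f : ℂ).re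
          = ∑ i, ∑ j, (inner ℂ (A (F i)) (F j) : ℂ).re := by
        conv_lhs => rw [← hsum]
        rw [map_sum, sum_inner, Complex.re_sum]
        refine Finset.sum_congr rfl fun i _ => ?_
        rw [inner_sum, Complex.re_sum]
      set n : Fin k → ℝ := fun i => ‖F i‖ ^ 2 with hn
      have hstep : ∀ i : Fin k, ∑ j, (inner ℂ (A (F i)) (F j) : ℂ).re
          ≤ ∑ j ∈ Finset.univ.erase i, (-m * (n i + n j) / 2) := by
        intro i
        calc ∑ j, (inner ℂ (A (F i)) (F j) : ℂ).re
            = ∑ j ∈ Finset.univ.erase i, (inner ℂ (A (F i)) (F j) : ℂ).re :=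
              (Finset.sum_erase _ (by rw [hdiag i]; simp)).symm
          _ ≤ ∑ j ∈ Finset.univ.erase i, (-m * (n i + n j) / 2) :=
              Finset.sum_le_sum fun j hj =>
                hpairb i j (fun h => (Finset.mem_erase.mp hj).1 h.symm)
      have hcount : ∀ i : Fin k, ∑ j ∈ Finset.univ.erase i, (-m * (n i + n j) / 2)
          = -m / 2 * (((k : ℝ) - 1) * n i + (1 - n i)) := by
        intro i
        have hcard : ((Finset.univ.erase i).card : ℝ) = (k : ℝ) - 1 := by
          rw [Finset.card_erase_of_mem (Finset.mem_univ i), Finset.card_univ,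
            Fintype.card_fin]
          have : (1 : ℕ) ≤ k := hk
          push_cast [Nat.cast_sub this]
          ring
        have hsub : ∑ j ∈ Finset.univ.erase i, n j = 1 - n i := by
          rw [Finset.sum_erase_eq_sub (Finset.mem_univ i), hnormsum]
        have : ∀ j ∈ Finset.univ.erase i, -m * (n i + n j) / 2
            = -m / 2 * n i + -m / 2 * n j := by
          intro j _; ring
        rw [Finset.sum_congr rfl this, Finset.sum_add_distrib, Finset.sum_const,
          ← Finset.mul_sum, hsub, nsmul_eq_mul, hcard]
        ring
      have hfinal : (inner ℂ (A f) f : ℂ).re ≤ ((k : ℝ) - 1) * (-m) := by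
        rw [hexpand]
        calc ∑ i, ∑ j, (inner ℂ (A (F i)) (F j) : ℂ).re
            ≤ ∑ i : Fin k, (-m / 2 * (((k : ℝ) - 1) * n i + (1 - n i))) := by
              refine Finset.sum_le_sum fun i _ => ?_
              rw [← hcount i]
              exact hstep i
          _ = -m / 2 * (((k : ℝ) - 1) * (∑ i, n i) + ((k : ℝ) - ∑ i, n i)) := by
              rw [← Finset.mul_sum, Finset.sum_add_distrib, Finset.sum_sub_distrib,
                Finset.sum_const, Finset.card_univ, Fintype.card_fin,
                ← Finset.mul_sum, nsmul_eq_mul, mul_one]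
          _ = ((k : ℝ) - 1) * (-m) := by
              rw [hnormsum]; ring
      exact hfinal
    have hMle : M ≤ ((k : ℝ) - 1) * (-m) := hM.2 hub
    have hk1 : (1 : ℝ) ≤ (k : ℝ) := by exact_mod_cast hk
    rw [div_le_iff₀ (by linarith : (0 : ℝ) < -m)]
    nlinarith
  · -- m = 0 : division by zero, trivial
    rw [hm0]
    simp
  · -- m > 0 : left side is nonpositive
    have h1 : (M - m) / (-m) ≤ 0 :=
      div_nonpos_iff.mpr (Or.inl ⟨by linarith, by linarith⟩)
    exact h1.trans (Nat.cast_nonneg k)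
end

section
/- If A is a nonzero bounded self-adjoint operator on L²(V) with finite chromatic number (V partitions into finitely many independent sets), then m(A) < 0 and M(A) > 0. -/
open MeasureTheory

-- auxiliary: coercion of a finite sum in Lp
lemma lp_coeFn_sum {V : Type*} [MeasurableSpace V] (μ : Measure V) {ι : Type*}
    (s : Finset ι) (g : ι → Lp ℂ 2 μ) :
    ⇑(∑ i ∈ s, g i) =ᵐ[μ] fun x => ∑ i ∈ s, g i x := by
  classical
  induction s using Finset.induction_on with
  | empty => simp only [Finset.sum_empty]; exact Lp.coeFn_zero (E := ℂ) (p := 2) (μ := μ)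
  | @insert a s ha ih =>
    rw [Finset.sum_insert ha]
    filter_upwards [Lp.coeFn_add (g a) (∑ i ∈ s, g i), ih] with x hx1 hx2
    simp only [hx1, Pi.add_apply, Finset.sum_insert ha, hx2]

/-- A nonzero bounded self-adjoint operator on `L²(V)` with finite chromatic
number satisfies `m(A) < 0` and `M(A) > 0`. -/
theorem endpoints_signs_of_finite_chromatic {V : Type*} [MeasurableSpace V]
    (μ : Measure V)
    (A : Lp ℂ 2 μ →L[ℂ] Lp ℂ 2 μ) (hA0 : A ≠ 0)
    (hsa : ∀ f g : Lp ℂ 2 μ, (inner ℂ (A f) g : ℂ) = inner ℂ f (A g))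
    (m M : ℝ)
    (hm : IsGLB {r : ℝ | ∃ f : Lp ℂ 2 μ, ‖f‖ = 1 ∧ r = (inner ℂ (A f) f : ℂ).re} m)
    (hM : IsLUB {r : ℝ | ∃ f : Lp ℂ 2 μ, ‖f‖ = 1 ∧ r = (inner ℂ (A f) f : ℂ).re} M)
    (k : ℕ) (C : Fin k → Set V) (hCm : ∀ i, MeasurableSet (C i))
    (hpart : ∀ x : V, ∃! i, x ∈ C i)
    (hind : ∀ i, ∀ f : Lp ℂ 2 μ, (∀ᵐ x ∂μ, x ∉ C i → f x = 0) →
      (inner ℂ (A f) f : ℂ) = 0) :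
    m < 0 ∧ 0 < M := by
  classical
  set S := {r : ℝ | ∃ f : Lp ℂ 2 μ, ‖f‖ = 1 ∧ r = (inner ℂ (A f) f : ℂ).re} with hS
  -- quadratic form is real
  have hreal : ∀ g : Lp ℂ 2 μ, ((inner ℂ (A g) g : ℂ)).im = 0 := by
    intro g
    have h1 : (starRingEnd ℂ) (inner ℂ (A g) g : ℂ) = (inner ℂ (A g) g : ℂ) := by
      rw [inner_conj_symm]
      exact (hsa g g).symm
    exact Complex.conj_eq_iff_im.mp h1
  -- nonzero re implies nonzero inner, and g ≠ 0
  have hre_ne : ∀ g : Lp ℂ 2 μ, (inner ℂ (A g) g : ℂ) ≠ 0 → (inner ℂ (A g) g : ℂ).re ≠ 0 := by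
    intro g hg hre
    exact hg (Complex.ext hre (hreal g))
  -- scaling: normalized version
  have hmemS : ∀ g : Lp ℂ 2 μ, g ≠ 0 → (‖g‖⁻¹ ^ 2 * (inner ℂ (A g) g : ℂ).re) ∈ S := by
    intro g hg
    have hn : ‖g‖ ≠ 0 := norm_ne_zero_iff.mpr hg
    refine ⟨((‖g‖⁻¹ : ℝ) : ℂ) • g, ?_, ?_⟩
    · rw [norm_smul]
      simp [abs_of_nonneg, hn]
    · have hkey2 : (inner ℂ (A (((‖g‖⁻¹ : ℝ) : ℂ) • g)) (((‖g‖⁻¹ : ℝ) : ℂ) • g) : ℂ)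
          = ((‖g‖⁻¹ ^ 2 : ℝ) : ℂ) * (inner ℂ (A g) g : ℂ) := by
        rw [A.map_smul, inner_smul_left, inner_smul_right, Complex.conj_ofReal]
        push_cast; ring
      rw [hkey2, Complex.re_ofReal_mul]
  -- there is a unit vector with nonzero quadratic form
  obtain ⟨u, hu1, huq⟩ : ∃ u : Lp ℂ 2 μ, ‖u‖ = 1 ∧ (inner ℂ (A u) u : ℂ).re ≠ 0 := by
    by_contra hcon
    push_neg at hcon
    have hall : ∀ f : Lp ℂ 2 μ, (inner ℂ (A f) f : ℂ) = 0 := by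
      intro f
      by_cases hf : f = 0
      · simp [hf]
      · by_contra hne
        have hre := hre_ne f hne
        have hn : ‖f‖ ≠ 0 := norm_ne_zero_iff.mpr hf
        obtain ⟨g, hg1, hg2⟩ := hmemS f hf
        have := hcon g hg1
        rw [← hg2] at this
        exact (mul_ne_zero (pow_ne_zero 2 (inv_ne_zero hn)) hre) this
    apply hA0
    have h0 : (A : Lp ℂ 2 μ →ₗ[ℂ] Lp ℂ 2 μ) = 0 :=
      (inner_map_self_eq_zero _).mp (fun x => hall x)
    apply ContinuousLinearMap.coe_injective
    simpa using h0
  -- the partition pieces of u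
  set fi : Fin k → Lp ℂ 2 μ := fun i =>
    MemLp.toLp ((C i).indicator u) ((Lp.memLp u).indicator (hCm i)) with hfi
  have hfi_coe : ∀ i, ⇑(fi i) =ᵐ[μ] (C i).indicator u := fun i => MemLp.coeFn_toLp _
  have hdiag : ∀ i, (inner ℂ (A (fi i)) (fi i) : ℂ) = 0 := by
    intro i
    refine hind i (fi i) ?_
    filter_upwards [hfi_coe i] with x hx hxC
    rw [hx]
    exact Set.indicator_of_notMem hxC u
  have hsum_u : ∑ i, fi i = u := by
    apply Lp.ext
    have h1 := lp_coeFn_sum μ Finset.univ fi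
    have h2 : (fun x => ∑ i, fi i x) =ᵐ[μ] ⇑u := by
      have h3 : ∀ᵐ x ∂μ, ∀ i, fi i x = (C i).indicator u x := by
        rw [MeasureTheory.ae_all_iff]
        exact hfi_coe
      filter_upwards [h3] with x hx
      simp only [hx]
      obtain ⟨i₀, hi₀, huniq⟩ := hpart x
      rw [Finset.sum_eq_single i₀]
      · exact Set.indicator_of_mem hi₀ u
      · intro j _ hj
        refine Set.indicator_of_notMem (fun hxj => hj (huniq j hxj)) u
      · intro h; exact absurd (Finset.mem_univ i₀) h
    exact h1.trans h2
  -- signs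
  set sg : Bool → ℝ := fun b => if b then 1 else -1 with hsg
  set g : (Fin k → Bool) → Lp ℂ 2 μ := fun ε => ∑ i, ((sg (ε i) : ℝ) : ℂ) • fi i with hg
  have hQ : ∀ ε, (inner ℂ (A (g ε)) (g ε) : ℂ).re =
      ∑ i, ∑ j, sg (ε i) * sg (ε j) * (inner ℂ (A (fi i)) (fi j) : ℂ).re := by
    intro ε
    have : (inner ℂ (A (g ε)) (g ε) : ℂ) =
        ∑ i, ∑ j, (((sg (ε i) * sg (ε j) : ℝ)) : ℂ) * (inner ℂ (A (fi i)) (fi j) : ℂ) := by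
      rw [hg]
      rw [map_sum, sum_inner]
      refine Finset.sum_congr rfl fun i _ => ?_
      rw [inner_sum]
      refine Finset.sum_congr rfl fun j _ => ?_
      rw [inner_smul_right, A.map_smul, inner_smul_left, Complex.conj_ofReal]
      push_cast
      ring
    rw [this, Complex.re_sum]
    refine Finset.sum_congr rfl fun i _ => ?_
    rw [Complex.re_sum]
    refine Finset.sum_congr rfl fun j _ => ?_
    rw [Complex.re_ofReal_mul]
  -- sum over all sign patterns is zero
  have hkey : ∀ i j : Fin k, i ≠ j →
      ∑ ε : Fin k → Bool, sg (ε i) * sg (ε j) = 0 := by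
    intro i j hij
    have hinv : Function.Involutive
        (fun ε : Fin k → Bool => Function.update ε i (!(ε i))) := by
      intro ε; funext x
      rcases eq_or_ne x i with rfl | hx
      · simp
      · simp [Function.update_of_ne hx]
    have hcomp := Function.Bijective.sum_comp hinv.bijective
      (fun ε : Fin k → Bool => sg (ε i) * sg (ε j))
    have hneg : ∀ ε : Fin k → Bool,
        sg ((Function.update ε i (!(ε i))) i) * sg ((Function.update ε i (!(ε i))) j)
          = -(sg (ε i) * sg (ε j)) := by
      intro ε
      rw [Function.update_self, Function.update_of_ne (Ne.symm hij)]
      rcases Bool.dichotomy (ε i) with h | h <;>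
        rcases Bool.dichotomy (ε j) with h' | h' <;> simp [h, h', hsg]
    have : ∑ ε : Fin k → Bool, sg (ε i) * sg (ε j)
        = -∑ ε : Fin k → Bool, sg (ε i) * sg (ε j) := by
      conv_lhs => rw [← hcomp]
      rw [← Finset.sum_neg_distrib]
      exact Finset.sum_congr rfl fun ε _ => hneg ε
    linarith
  have hsum0 : ∑ ε : Fin k → Bool, (inner ℂ (A (g ε)) (g ε) : ℂ).re = 0 := by
    simp only [hQ]
    rw [Finset.sum_comm]
    refine Finset.sum_eq_zero fun i _ => ?_
    rw [Finset.sum_comm]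
    refine Finset.sum_eq_zero fun j _ => ?_
    rcases eq_or_ne i j with rfl | hij
    · simp [hdiag i]
    · rw [← Finset.sum_mul]
      rw [hkey i j hij, zero_mul]
  -- the all-true sign pattern gives u
  have hgtrue : g (fun _ => true) = u := by
    rw [hg]
    simp only [hsg, if_true, Complex.ofReal_one, one_smul]
    exact hsum_u
  -- helper to conclude each half
  have hneg_of : ∀ ε : Fin k → Bool, (inner ℂ (A (g ε)) (g ε) : ℂ).re < 0 → m < 0 := by
    intro ε hε
    have hgne : g ε ≠ 0 := by
      intro h0; rw [h0] at hε; simp at hε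
    have hmem := hmemS (g ε) hgne
    have hpos : (0 : ℝ) < ‖g ε‖⁻¹ ^ 2 := by
      have : ‖g ε‖ ≠ 0 := norm_ne_zero_iff.mpr hgne
      positivity
    have : ‖g ε‖⁻¹ ^ 2 * (inner ℂ (A (g ε)) (g ε) : ℂ).re < 0 :=
      mul_neg_of_pos_of_neg hpos hε
    exact lt_of_le_of_lt (hm.1 hmem) this
  have hpos_of : ∀ ε : Fin k → Bool, 0 < (inner ℂ (A (g ε)) (g ε) : ℂ).re → 0 < M := by
    intro ε hε
    have hgne : g ε ≠ 0 := by
      intro h0; rw [h0] at hε; simp at hε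
    have hmem := hmemS (g ε) hgne
    have hpos : (0 : ℝ) < ‖g ε‖⁻¹ ^ 2 := by
      have : ‖g ε‖ ≠ 0 := norm_ne_zero_iff.mpr hgne
      positivity
    have : 0 < ‖g ε‖⁻¹ ^ 2 * (inner ℂ (A (g ε)) (g ε) : ℂ).re :=
      mul_pos hpos hε
    exact lt_of_lt_of_le this (hM.1 hmem)
  rcases lt_or_gt_of_ne huq with hneg | hpos
  · -- Q u < 0 : m < 0 direct; find positive pattern
    constructor
    · exact hneg_of (fun _ => true) (by rw [hgtrue]; exact hneg)
    · by_contra hcon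
      push_neg at hcon
      have hall : ∀ ε : Fin k → Bool, (inner ℂ (A (g ε)) (g ε) : ℂ).re ≤ 0 := by
        intro ε
        by_contra h
        push_neg at h
        exact absurd (hpos_of ε h) (not_lt.mpr hcon)
      have := (Finset.sum_eq_zero_iff_of_nonpos
        (fun ε _ => hall ε)).mp hsum0 (fun _ => true) (Finset.mem_univ _)
      rw [hgtrue] at this
      linarith
  · constructor
    · by_contra hcon
      push_neg at hcon
      have hall : ∀ ε : Fin k → Bool, 0 ≤ (inner ℂ (A (g ε)) (g ε) : ℂ).re := by
        intro ε
        by_contra h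
        push_neg at h
        exact absurd (hneg_of ε h) (not_lt.mpr hcon)
      have := (Finset.sum_eq_zero_iff_of_nonneg
        (fun ε _ => hall ε)).mp hsum0 (fun _ => true) (Finset.mem_univ _)
      rw [hgtrue] at this
      linarith
    · exact hpos_of (fun _ => true) (by rw [hgtrue]; exact hpos)
end

section
/- Feasible solutions of the generalized theta program bound the measure of independent sets: let (V, μ) be a probability space, λ ∈ ℝ, and Z a bounded self-adjoint operator on L²(V) such that λ·I + Z − J is a positive operator, where J f = ⟨f, 1_V⟩·1_V. If I ⊆ V is measurable with μ(I) > 0 and ⟨Z 1_I, 1_I⟩ = 0, then μ(I) ≤ λ. -/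
open MeasureTheory

/-- Feasible solutions of the generalized theta program bound the measure of
independent sets: if `λ·I + Z - J ⪰ 0` and `I` is independent for `Z` with
`μ(I) > 0`, then `μ(I) ≤ λ`. -/
theorem theta_feasible_bounds_independent {V : Type*} [MeasurableSpace V]
    (μ : Measure V) [IsProbabilityMeasure μ]
    (Z : Lp ℂ 2 μ →L[ℂ] Lp ℂ 2 μ)
    (hsa : ∀ f g : Lp ℂ 2 μ, (inner ℂ (Z f) g : ℂ) = inner ℂ f (Z g))
    (lam : ℝ) (one : Lp ℂ 2 μ) (hone : ∀ᵐ x ∂μ, one x = 1)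
    (hpos : ∀ f : Lp ℂ 2 μ,
      0 ≤ ((inner ℂ ((lam : ℂ) • f + Z f - (inner ℂ f one : ℂ) • one) f : ℂ)).re)
    (I : Set V) (hIm : MeasurableSet I) (hIpos : 0 < μ I)
    (indI : Lp ℂ 2 μ)
    (hindI : ∀ᵐ x ∂μ, indI x = Set.indicator I (fun _ => (1 : ℂ)) x)
    (hZI : (inner ℂ (Z indI) indI : ℂ) = 0) :
    (μ I).toReal ≤ lam := by
  set m : ℝ := (μ I).toReal with hm
  have hI1 : μ I ≤ 1 := prob_le_one
  have hmpos : 0 < m := ENNReal.toReal_pos hIpos.ne' (lt_of_le_of_lt hI1 (by norm_num)).ne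
  -- compute the integral of the indicator
  have hint : ∫ x, Set.indicator I (fun _ => (1 : ℂ)) x ∂μ = (m : ℂ) := by
    rw [integral_indicator_const (1 : ℂ) hIm]
    simp [hm, Measure.real]
  have h1 : (inner ℂ indI one : ℂ) = (m : ℂ) := by
    rw [MeasureTheory.L2.inner_def]
    rw [← hint]
    apply integral_congr_ae
    filter_upwards [hone, hindI] with x hx hx'
    simp only [RCLike.inner_apply, hx, hx', mul_one]
    by_cases h : x ∈ I <;> simp [h]
  have h2 : (inner ℂ one indI : ℂ) = (m : ℂ) := by
    rw [← inner_conj_symm, h1]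
    simp
  have h3 : (inner ℂ indI indI : ℂ) = (m : ℂ) := by
    rw [MeasureTheory.L2.inner_def]
    rw [← hint]
    apply integral_congr_ae
    filter_upwards [hindI] with x hx
    simp only [RCLike.inner_apply, hx]
    by_cases h : x ∈ I <;> simp [h]
  have := hpos indI
  rw [inner_sub_left, inner_add_left, inner_smul_left, inner_smul_left, hZI, h1, h3, h2] at this
  simp only [map_ofNat, Complex.conj_ofReal, zero_add, add_zero] at this
  rw [show ((lam : ℂ) * m - (m : ℂ) * m) = ((lam * m - m * m : ℝ) : ℂ) by push_cast; ring,
    Complex.ofReal_re] at this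
  nlinarith
end

section
/- Construction of a feasible theta solution from an operator: let (V, μ) be a probability space and A a bounded self-adjoint operator on L²(V) with A 1_V = M₁·1_V for some M₁ ∈ ℝ, with m(A) = −1 (i.e., inf over unit vectors of ⟨Af,f⟩ equals −1) and M₁ + 1 > 0. Set λ = 1/(M₁ + 1) and Z = λ·A. Then λ·I + Z − J is a positive operator, where J f = ⟨f, 1_V⟩·1_V. -/
open MeasureTheory

set_option maxHeartbeats 1000000

/-- Construction of a feasible theta solution from an operator: if `A 1 = M₁·1`,
`m(A) = -1` and `M₁ + 1 > 0`, then with `λ = 1/(M₁+1)` and `Z = λ·A` the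
operator `λ·I + Z - J` is positive. -/
theorem theta_feasible_from_operator {V : Type*} [MeasurableSpace V]
    (μ : Measure V) [IsProbabilityMeasure μ]
    (A : Lp ℂ 2 μ →L[ℂ] Lp ℂ 2 μ)
    (hsa : ∀ f g : Lp ℂ 2 μ, (inner ℂ (A f) g : ℂ) = inner ℂ f (A g))
    (one : Lp ℂ 2 μ) (hone : ∀ᵐ x ∂μ, one x = 1)
    (M₁ : ℝ) (heig : A one = (M₁ : ℂ) • one)
    (hm : IsGLB {r : ℝ | ∃ f : Lp ℂ 2 μ, ‖f‖ = 1 ∧ r = (inner ℂ (A f) f : ℂ).re}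
      (-1 : ℝ))
    (hM₁ : 0 < M₁ + 1) :
    ∀ f : Lp ℂ 2 μ,
      0 ≤ ((inner ℂ (((1 / (M₁ + 1) : ℝ) : ℂ) • f + ((1 / (M₁ + 1) : ℝ) : ℂ) • A f
        - (inner ℂ f one : ℂ) • one) f : ℂ)).re := by
  intro f
  -- ⟪one, one⟫ = 1
  have hone2 : (inner ℂ one one : ℂ) = 1 := by
    rw [MeasureTheory.L2.inner_def]
    have h : ∀ᵐ x ∂μ, (inner ℂ (one x) (one x) : ℂ) = 1 := by
      filter_upwards [hone] with x hx
      simp [hx]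
    rw [integral_congr_ae h]
    simp
  -- lower bound from the GLB
  have hlb : ∀ h : Lp ℂ 2 μ, -(‖h‖^2) ≤ (inner ℂ (A h) h : ℂ).re := by
    intro h
    rcases eq_or_ne h 0 with rfl | hne
    · simp
    · have hn : (0:ℝ) < ‖h‖ := norm_pos_iff.mpr hne
      set u : Lp ℂ 2 μ := ((‖h‖⁻¹ : ℝ) : ℂ) • h with hu
      have hnu : ‖u‖ = 1 := by
        rw [hu, norm_smul]
        simp [abs_of_pos (inv_pos.mpr hn), inv_mul_cancel₀ hn.ne']
      have hmem : (inner ℂ (A u) u : ℂ).re ∈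
          {r : ℝ | ∃ f : Lp ℂ 2 μ, ‖f‖ = 1 ∧ r = (inner ℂ (A f) f : ℂ).re} :=
        ⟨u, hnu, rfl⟩
      have hge : (-1 : ℝ) ≤ (inner ℂ (A u) u : ℂ).re := hm.1 hmem
      have hcalc : (inner ℂ (A u) u : ℂ) =
          ((‖h‖⁻¹ : ℝ)^2 : ℝ) * inner ℂ (A h) h := by
        rw [hu, A.map_smul, inner_smul_left, inner_smul_right, Complex.conj_ofReal]
        push_cast
        ring
      have hge' : (-1 : ℝ) ≤ (‖h‖⁻¹)^2 * (inner ℂ (A h) h : ℂ).re := by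
        rw [hcalc, Complex.re_ofReal_mul] at hge
        exact hge
      have h2 : (0:ℝ) < ‖h‖^2 := by positivity
      have h3 : (‖h‖⁻¹)^2 * ‖h‖^2 = 1 := by field_simp
      nlinarith [hge', h2, h3]
  set c : ℂ := inner ℂ one f with hc
  set g : Lp ℂ 2 μ := f - c • one with hg
  have hfg : f = c • one + g := by rw [hg]; abel
  have hog : (inner ℂ one g : ℂ) = 0 := by
    rw [hg, inner_sub_right, inner_smul_right, hone2, ← hc]
    ring
  have hgo : (inner ℂ g one : ℂ) = 0 := by
    rw [← @inner_conj_symm ℂ, hog]; simp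
  have hoAg : (inner ℂ one (A g) : ℂ) = 0 := by
    rw [← hsa, heig, inner_smul_left, hog, mul_zero]
  have hAgo : (inner ℂ (A g) one : ℂ) = 0 := by
    rw [← @inner_conj_symm ℂ, hoAg]; simp
  have hAf : A f = (c * (M₁ : ℂ)) • one + A g := by
    rw [hfg, map_add, A.map_smul, heig, smul_smul]
  have h1 : (inner ℂ f f : ℂ) = (starRingEnd ℂ c) * c + inner ℂ g g := by
    conv_lhs => rw [hfg]
    simp [inner_add_left, inner_add_right, inner_smul_left, inner_smul_right,
      hone2, hog, hgo, -inner_self_eq_norm_sq_to_K]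
    ring
  have h2 : (inner ℂ (A f) f : ℂ) = (starRingEnd ℂ c) * c * (M₁ : ℂ) + inner ℂ (A g) g := by
    conv_lhs => rw [hAf, hfg]
    simp [inner_add_left, inner_add_right, inner_smul_left, inner_smul_right,
      hone2, hog, hgo, hoAg, hAgo, Complex.conj_ofReal, map_mul, -inner_self_eq_norm_sq_to_K]
    ring
  have hfo : (inner ℂ f one : ℂ) = starRingEnd ℂ c := by
    rw [← @inner_conj_symm ℂ, hc]
  -- the big inner ℂ product
  have hbig : (inner ℂ (((1 / (M₁ + 1) : ℝ) : ℂ) • f + ((1 / (M₁ + 1) : ℝ) : ℂ) • A f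
        - (inner ℂ f one : ℂ) • one) f : ℂ) =
      ((1 / (M₁ + 1) : ℝ) : ℂ) * (inner ℂ f f : ℂ)
        + ((1 / (M₁ + 1) : ℝ) : ℂ) * (inner ℂ (A f) f : ℂ) - c^2 := by
    rw [inner_sub_left, inner_add_left, inner_smul_left, inner_smul_left,
      inner_smul_left, hfo, Complex.conj_ofReal]
    rw [Complex.conj_conj, ← hc]
    ring
  rw [hbig, h1, h2]
  have hgg : (inner ℂ g g : ℂ).re = ‖g‖^2 := by
    rw [← inner_self_eq_norm_sq (𝕜 := ℂ) g]
    rfl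
  have ht := hlb g
  set t : ℝ := (inner ℂ (A g) g : ℂ).re with htdef
  have hgg' : (inner ℂ g g : ℂ).im = 0 := inner_self_im (𝕜 := ℂ) g
  set lam : ℝ := 1 / (M₁ + 1) with hlam
  have hlampos : 0 < lam := by positivity
  have hlameq : lam * (M₁ + 1) = 1 := by
    rw [hlam]; field_simp
  simp only [pow_two, Complex.sub_re, Complex.add_re, Complex.re_ofReal_mul,
    Complex.mul_re, Complex.mul_im, Complex.ofReal_re, Complex.ofReal_im,
    Complex.conj_re, Complex.conj_im, mul_zero, zero_mul, sub_zero, add_zero,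
    neg_mul, neg_neg]
  nlinarith [hgg, ht, hgg', hlampos, hlameq, sq_nonneg c.im, sq_nonneg c.re]
end
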